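/- Let a : ℤ≥0 → (0,∞), β ≥ 0, and let T(x,y) = (1/(1+β a_y)) ∏_{k=x}^{y−1}(β a_k/(1+β a_k)) 1_{y≥x} be the geometric kernel. Define Blk(y', y, x) = T(y, y')·(1_{y'<x} + (1+β a_{y'}) 1_{y'=x}) and Psh(y', y, x') = T(y, y') 1_{x'<y} + T(x'+1, y') 1_{x'≥y}. Then for all integers y_i ≤ y_i' < y_{i+1} ≤ y_{i+1}' and y_i' ≤ x_i' < y_{i+1}': ∑_{x_i = y_i'}^{min(x_i', y_{i+1}−1)} a_{x_i}^{-1} T(x_i, x_i') Blk(y_i', y_i, x_i) Psh(y_{i+1}', y_{i+1}, x_i') = a_{x_i'}^{-1} T(y_i, y_i') T(y_{i+1}, y_{i+1}'); and the left-hand side vanishes whenever the constraints y_i ≤ y_i' < y_{i+1} ≤ y_{i+1}' and y_i' ≤ x_i' < y_{i+1}' fail. -/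

import Mathlib

/-- The key summation identity behind the intertwining of the Warren-Windridge
geometric dynamics (Proposition KeyComputationGeometric). -/
theorem stmt19 (a : ℕ → ℝ) (hpos : ∀ k, 0 < a k) (ε M : ℝ) (hε : 0 < ε)
    (hlb : ∀ k, ε ≤ a k) (hub : ∀ k, a k ≤ M) (β : ℝ) (hβ : 0 ≤ β)
    (T : ℕ → ℕ → ℝ)
    (hT : ∀ x y, T x y =
      if x ≤ y then (1 + β * a y)⁻¹ * ∏ k ∈ Finset.Ico x y, (β * a k / (1 + β * a k)) else 0)
    (Blk Psh : ℕ → ℕ → ℕ → ℝ)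
    (hBlk : ∀ y' y x, Blk y' y x =
      T y y' * ((if y' < x then (1 : ℝ) else 0) + (1 + β * a y') * (if y' = x then 1 else 0)))
    (hPsh : ∀ y' y x', Psh y' y x' =
      T y y' * (if x' < y then (1 : ℝ) else 0) + T (x' + 1) y' * (if y ≤ x' then 1 else 0))
    (b b' c c' d : ℕ) :
    (b ≤ b' → b' < c → c ≤ c' → b' ≤ d → d < c' →
        ∑ m ∈ (Finset.Icc b' d).filter (fun m => m < c),
            (a m)⁻¹ * T m d * Blk b' b m * Psh c' c d
          = (a d)⁻¹ * T b b' * T c c') ∧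
      (¬(b ≤ b' ∧ b' < c ∧ c ≤ c' ∧ b' ≤ d ∧ d < c') →
        ∑ m ∈ (Finset.Icc b' d).filter (fun m => m < c),
            (a m)⁻¹ * T m d * Blk b' b m * Psh c' c d
          = 0) := by
  have h1 : ∀ k, (0:ℝ) < 1 + β * a k := fun k => by
    have := mul_nonneg hβ (hpos k).le; linarith
  have hTle : ∀ x y, x ≤ y → T x y
      = (1 + β * a y)⁻¹ * ∏ k ∈ Finset.Ico x y, (β * a k / (1 + β * a k)) := by
    intro x y h; rw [hT]; simp [h]
  have hTgt : ∀ x y, y < x → T x y = 0 := by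
    intro x y h; rw [hT]; simp [Nat.not_le.mpr h]
  have hTstep : ∀ m, m < d → T m d = (β * a m / (1 + β * a m)) * T (m+1) d := by
    intro m h
    rw [hTle m d h.le, hTle (m+1) d h, Finset.prod_eq_prod_Ico_succ_bot h]
    ring
  -- telescoping sum
  have hsum : ∀ N, b' ≤ N → N ≤ d →
      ∑ m ∈ Finset.Icc b' N, (a m)⁻¹ * T m d *
        ((if b' < m then (1:ℝ) else 0) + (1 + β * a b') * (if b' = m then 1 else 0))
      = T N d * (1 + β * a N) / a N := by
    intro N hN hNd
    induction N, hN using Nat.le_induction with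
    | base =>
        rw [Finset.Icc_self, Finset.sum_singleton]
        have := (hpos b').ne'
        simp only [lt_irrefl, if_neg (lt_irrefl b'), if_pos rfl]
        field_simp
        simp
    | succ N hN ih =>
        have hNd' : N ≤ d := by omega
        rw [Finset.sum_Icc_succ_top (by omega), ih hNd']
        have hb'N : b' < N + 1 := by omega
        have hb'ne : b' ≠ N + 1 := by omega
        rw [if_pos hb'N, if_neg hb'ne]
        have hrel : T N d = (β * a N / (1 + β * a N)) * T (N+1) d := hTstep N (by omega)
        rw [hrel]
        have hane : a N ≠ 0 := (hpos N).ne'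
        have hane' : a (N+1) ≠ 0 := (hpos (N+1)).ne'
        have h1ne : (1 + β * a N) ≠ 0 := (h1 N).ne'
        field_simp
        ring
  constructor
  · intro hbb' hb'c hcc' hb'd hdc'
    have hc0 : 1 ≤ c := by omega
    set N := min d (c - 1) with hNdef
    have hset : (Finset.Icc b' d).filter (fun m => m < c) = Finset.Icc b' N := by
      ext m; simp only [Finset.mem_filter, Finset.mem_Icc]; omega
    have hb'N : b' ≤ N := by omega
    have hNd : N ≤ d := by omega
    rw [hset]
    have hterm : ∀ m ∈ Finset.Icc b' N,
        (a m)⁻¹ * T m d * Blk b' b m * Psh c' c d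
        = (T b b' * Psh c' c d) * ((a m)⁻¹ * T m d *
          ((if b' < m then (1:ℝ) else 0) + (1 + β * a b') * (if b' = m then 1 else 0))) := by
      intro m _; rw [hBlk]; ring
    rw [Finset.sum_congr rfl hterm, ← Finset.mul_sum, hsum N hb'N hNd]
    by_cases hdc : d < c
    · have hNd2 : N = d := by omega
      rw [hNd2, hPsh, if_pos hdc, if_neg (by omega), hTle d d le_rfl]
      have hane : a d ≠ 0 := (hpos d).ne'
      have h1ne : (1 + β * a d) ≠ 0 := (h1 d).ne'
      simp only [Finset.Ico_self, Finset.prod_empty]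
      field_simp
      ring
    · -- c ≤ d
      have hcd : c ≤ d := by omega
      have hNc : N = c - 1 := by omega
      have hc1 : c - 1 + 1 = c := by omega
      rw [hNc, hPsh, if_neg (by omega), if_pos hcd]
      have hrel : T (c-1) d = (β * a (c-1) / (1 + β * a (c-1))) * T c d := by
        have := hTstep (c-1) (by omega); rwa [hc1] at this
      rw [hrel]
      -- now need: T b b' * (T (d+1) c') * (β * T c d) = a d⁻¹ * T b b' * T c c'
      have hsplit : β * T c d * T (d+1) c' = (a d)⁻¹ * T c c' := by
        rw [hTle c d hcd, hTle (d+1) c' hdc', hTle c c' (by omega)]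
        have hIco : Finset.Ico c c' = Finset.Ico c (d+1) ∪ Finset.Ico (d+1) c' := by
          rw [Finset.Ico_union_Ico_eq_Ico (by omega) (by omega)]
        rw [hIco, Finset.prod_union (by
          apply Finset.Ico_disjoint_Ico_consecutive),
          Finset.prod_Ico_succ_top (by omega : c ≤ d)]
        have hane : a d ≠ 0 := (hpos d).ne'
        have h1ne : (1 + β * a d) ≠ 0 := (h1 d).ne'
        have h1ne' : (1 + β * a c') ≠ 0 := (h1 c').ne'
        set P := ∏ k ∈ Finset.Ico c d, (β * a k / (1 + β * a k))
        set Q := ∏ k ∈ Finset.Ico (d+1) c', (β * a k / (1 + β * a k))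
        field_simp
      have hane1 : a (c-1) ≠ 0 := (hpos (c-1)).ne'
      have h1ne1 : (1 + β * a (c-1)) ≠ 0 := (h1 (c-1)).ne'
      have key : β * a (c-1) / (1 + β * a (c-1)) * T c d * (1 + β * a (c-1)) / a (c-1)
          = β * T c d := by field_simp
      rw [mul_zero, zero_add, mul_one, key]
      linear_combination T b b' * hsplit
  · intro hfail
    by_cases hne : b' ≤ d ∧ b' < c
    · obtain ⟨hb'd, hb'c⟩ := hne
      by_cases hbb' : b ≤ b'
      · -- Psh must be zero
        have hPsh0 : Psh c' c d = 0 := by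
          rw [hPsh]
          by_cases hdc : d < c
          · have hcc' : c' < c := by omega
            rw [hTgt c c' hcc', if_neg (show ¬ c ≤ d by omega)]
            ring
          · have hdc' : c' ≤ d := by omega
            rw [if_neg hdc, hTgt (d+1) c' (by omega)]
            ring
        apply Finset.sum_eq_zero
        intro m _
        rw [hPsh0]; ring
      · apply Finset.sum_eq_zero
        intro m _
        rw [hBlk, hTgt b b' (by omega)]; ring
    · apply Finset.sum_eq_zero
      intro m hm
      simp only [Finset.mem_filter, Finset.mem_Icc] at hm
      omega
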